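/- Fix δ > 0 and real numbers A < B. The quadruple series over primes p, q and positive integers m, n with q^n ≥ p^{2m} of p^{-m(1+δ)} q^{-n} (m log p)^B (log p) / (n (n log q - m log p)) converges, and is bounded by 2 (∑_{p,m} p^{-m(1+δ)} (m log p)^B log p)(∑_{q,n} q^{-n}/(n² log q)). -/

import Mathlib

open Finset in
lemma count_bound (k : ℕ) :
    k * ((Finset.Ico (2^k) (2^(k+1))).filter Nat.Prime).card ≤ 2^(k+2) := by
  set s := (Finset.Ico (2^k) (2^(k+1))).filter Nat.Prime with hs
  have h1 : (2^k : ℕ) ^ s.card ≤ ∏ p ∈ s, p := by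
    rw [← Finset.prod_const]
    refine Finset.prod_le_prod' ?_
    intro p hp
    exact (Finset.mem_Ico.mp (Finset.mem_filter.mp hp).1).1
  have h2 : ∏ p ∈ s, p ≤ primorial (2^(k+1)) := by
    unfold primorial
    refine Finset.prod_le_prod_of_subset_of_one_le' ?_ ?_
    · intro p hp
      rw [Finset.mem_filter] at hp ⊢
      refine ⟨Finset.mem_range.mpr ?_, hp.2⟩
      exact lt_of_lt_of_le (Finset.mem_Ico.mp hp.1).2 (Nat.le_succ _)
    · intro p hp _
      exact ((Finset.mem_filter.mp hp).2).one_lt.le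
  have h3 : primorial (2^(k+1)) ≤ 4 ^ (2^(k+1)) := primorial_le_4_pow _
  have h4 : (2:ℕ) ^ (k * s.card) ≤ 2 ^ (2^(k+2)) := by
    calc (2:ℕ) ^ (k * s.card) = (2^k) ^ s.card := by rw [pow_mul]
    _ ≤ primorial (2^(k+1)) := le_trans h1 h2
    _ ≤ 4 ^ (2^(k+1)) := h3
    _ = 2 ^ (2^(k+2)) := by
        rw [show (4:ℕ) = 2^2 by norm_num, ← pow_mul, pow_succ 2 (k+1)]
        ring_nf
  exact (Nat.pow_le_pow_iff_right (by norm_num)).mp h4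

noncomputable section

def pk (p : Nat.Primes) : ℕ := Nat.log 2 (p : ℕ)

def rnk (p : Nat.Primes) : ℕ := ((Finset.Ico (2^(pk p)) (p:ℕ)).filter Nat.Prime).card

lemma pk_pos (p : Nat.Primes) : 1 ≤ pk p := Nat.log_pos one_lt_two p.property.two_le

lemma pk_low (p : Nat.Primes) : 2 ^ (pk p) ≤ (p : ℕ) :=
  Nat.pow_log_le_self 2 p.property.pos.ne'

lemma pk_high (p : Nat.Primes) : (p : ℕ) < 2 ^ (pk p + 1) :=
  Nat.lt_pow_succ_log_self one_lt_two _

lemma rnk_lt (p : Nat.Primes) :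
    rnk p < ((Finset.Ico (2^(pk p)) (2^(pk p + 1))).filter Nat.Prime).card := by
  refine Finset.card_lt_card ?_
  refine (Finset.ssubset_iff_of_subset
    (Finset.filter_subset_filter _ (Finset.Ico_subset_Ico le_rfl (pk_high p).le))).mpr ?_
  refine ⟨(p:ℕ), ?_, ?_⟩
  · exact Finset.mem_filter.mpr ⟨Finset.mem_Ico.mpr ⟨pk_low p, pk_high p⟩, p.property⟩
  · intro hmem
    exact absurd (Finset.mem_Ico.mp (Finset.mem_filter.mp hmem).1).2 (lt_irrefl _)

lemma rnk_mono {p q : Nat.Primes} (hk : pk p = pk q) (hlt : (p:ℕ) < (q:ℕ)) :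
    rnk p < rnk q := by
  unfold rnk
  rw [hk]
  refine Finset.card_lt_card ?_
  refine (Finset.ssubset_iff_of_subset
    (Finset.filter_subset_filter _ (Finset.Ico_subset_Ico le_rfl hlt.le))).mpr ?_
  refine ⟨(p:ℕ), ?_, ?_⟩
  · refine Finset.mem_filter.mpr ⟨Finset.mem_Ico.mpr ⟨?_, hlt⟩, p.property⟩
    rw [← hk]; exact pk_low p
  · intro hmem
    exact absurd (Finset.mem_Ico.mp (Finset.mem_filter.mp hmem).1).2 (lt_irrefl _)

lemma iota_inj : Function.Injective (fun p : Nat.Primes => (pk p, rnk p)) := by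
  intro p q h
  simp only [Prod.mk.injEq] at h
  obtain ⟨hk, hr⟩ := h
  rcases lt_trichotomy (p:ℕ) (q:ℕ) with hlt | heq | hgt
  · exact absurd hr (rnk_mono hk hlt).ne
  · exact Subtype.ext heq
  · exact absurd hr.symm (rnk_mono hk.symm hgt).ne

lemma rnk_mul_pk_lt (p : Nat.Primes) : rnk p * pk p < 2 ^ (pk p + 2) := by
  have h1 : rnk p * pk p
      < ((Finset.Ico (2^(pk p)) (2^(pk p + 1))).filter Nat.Prime).card * pk p :=
    (Nat.mul_lt_mul_right (pk_pos p)).mpr (rnk_lt p)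
  calc rnk p * pk p < _ := h1
  _ = pk p * ((Finset.Ico (2^(pk p)) (2^(pk p + 1))).filter Nat.Prime).card := mul_comm _ _
  _ ≤ 2 ^ (pk p + 2) := count_bound (pk p)

def Mfun : ℕ × ℕ → ℝ := fun kj =>
  if kj.2 * kj.1 < 2 ^ (kj.1 + 2) then 1 / (2 ^ kj.1 * ((kj.1 : ℝ) * Real.log 2)) else 0

lemma Mfun_nonneg : ∀ kj, 0 ≤ Mfun kj := by
  intro kj
  unfold Mfun
  split
  · positivity
  · exact le_rfl

lemma Mfun_row_zero (j : ℕ) : Mfun (0, j) = 0 := by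
  simp [Mfun]

lemma Mfun_row_summable (k : ℕ) : Summable (fun j => Mfun (k, j)) := by
  rcases Nat.eq_zero_or_pos k with rfl | hk
  · simpa [Mfun_row_zero] using summable_zero
  · refine summable_of_ne_finset_zero (s := Finset.range (2 ^ (k + 2))) ?_
    intro j hj
    rw [Finset.mem_range, not_lt] at hj
    unfold Mfun
    rw [if_neg]
    push_neg
    calc (2:ℕ) ^ (k+2) ≤ j := hj
    _ ≤ j * k := Nat.le_mul_of_pos_right j hk

lemma Mfun_eq_zero {k j : ℕ} (hk : 0 < k) (hj : 2^(k+2) ≤ j) : Mfun (k, j) = 0 := by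
  unfold Mfun
  rw [if_neg]
  push_neg
  calc (2:ℕ) ^ (k+2) ≤ j := hj
  _ ≤ j * k := Nat.le_mul_of_pos_right j hk

lemma Mfun_row_tsum_le (k : ℕ) :
    ∑' j, Mfun (k, j) ≤ (5 / Real.log 2) * (1 / (k:ℝ)^2) := by
  have hlog : (0:ℝ) < Real.log 2 := Real.log_pos one_lt_two
  rcases Nat.eq_zero_or_pos k with rfl | hk
  · simp [Mfun_row_zero]
  · set c : ℝ := 1 / (2 ^ k * ((k : ℝ) * Real.log 2)) with hc
    have hK1 : (1:ℝ) ≤ (k:ℝ) := by exact_mod_cast hk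
    have hK0 : (0:ℝ) < (k:ℝ) := by positivity
    have h2k : (k:ℝ) ≤ 2^k := by exact_mod_cast (Nat.lt_two_pow_self (n := k)).le
    have htsum : ∑' j, Mfun (k, j) = ∑ j ∈ Finset.range (2^(k+2)), Mfun (k, j) := by
      refine tsum_eq_sum ?_
      intro j hj
      exact Mfun_eq_zero hk (not_lt.mp (fun h => hj (Finset.mem_range.mpr h)) )
    rw [htsum]
    have hsplit : ∑ j ∈ Finset.range (2^(k+2)), Mfun (k, j)
        = (((Finset.range (2^(k+2))).filter (fun j => j * k < 2^(k+2))).card : ℝ) * c := by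
      simp only [Mfun]
      rw [Finset.sum_ite, Finset.sum_const, Finset.sum_const_zero, add_zero, nsmul_eq_mul]
    rw [hsplit]
    have hcard : ((Finset.range (2^(k+2))).filter (fun j => j * k < 2^(k+2))).card
        ≤ 2^(k+2)/k + 1 := by
      have hsub : (Finset.range (2^(k+2))).filter (fun j => j * k < 2^(k+2))
          ⊆ Finset.range (2^(k+2)/k + 1) := by
        intro j hj
        rw [Finset.mem_filter] at hj
        rw [Finset.mem_range]
        have : j ≤ 2^(k+2)/k := (Nat.le_div_iff_mul_le hk).mpr hj.2.le
        omega
      calc ((Finset.range (2^(k+2))).filter (fun j => j * k < 2^(k+2))).card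
          ≤ (Finset.range (2^(k+2)/k + 1)).card := Finset.card_le_card hsub
      _ = 2^(k+2)/k + 1 := Finset.card_range _
    have hcnn : 0 ≤ c := by positivity
    have step1 : (((Finset.range (2^(k+2))).filter (fun j => j * k < 2^(k+2))).card : ℝ) * c
        ≤ ((2:ℝ)^(k+2)/(k:ℝ) + 1) * c := by
      refine mul_le_mul_of_nonneg_right ?_ hcnn
      calc (((Finset.range (2^(k+2))).filter (fun j => j * k < 2^(k+2))).card : ℝ)
          ≤ ((2^(k+2)/k + 1 : ℕ) : ℝ) := by exact_mod_cast hcard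
      _ = ((2^(k+2)/k : ℕ) : ℝ) + 1 := by push_cast; ring
      _ ≤ (2:ℝ)^(k+2)/(k:ℝ) + 1 := by
          have := Nat.cast_div_le (α := ℝ) (m := 2^(k+2)) (n := k)
          push_cast at this ⊢
          linarith
    refine le_trans step1 ?_
    have hpow : (2:ℝ)^(k+2) = 4 * 2^k := by rw [pow_add]; ring
    have e1 : ((2:ℝ)^(k+2)/(k:ℝ)) * c = 4 / ((k:ℝ)^2 * Real.log 2) := by
      rw [hpow, hc]
      field_simp
    have e2 : c ≤ 1 / ((k:ℝ)^2 * Real.log 2) := by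
      rw [hc]
      refine one_div_le_one_div_of_le (by positivity) ?_
      calc (k:ℝ)^2 * Real.log 2 = (k:ℝ) * ((k:ℝ) * Real.log 2) := by ring
      _ ≤ 2^k * ((k:ℝ) * Real.log 2) := by
          refine mul_le_mul_of_nonneg_right h2k (by positivity)
    calc ((2:ℝ)^(k+2)/(k:ℝ) + 1) * c = ((2:ℝ)^(k+2)/(k:ℝ)) * c + c := by ring
    _ ≤ 4 / ((k:ℝ)^2 * Real.log 2) + 1 / ((k:ℝ)^2 * Real.log 2) := by
        rw [e1]; linarith
    _ = (5 / Real.log 2) * (1 / (k:ℝ)^2) := by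
        field_simp
        ring

lemma Mfun_summable : Summable Mfun := by
  refine (summable_prod_of_nonneg Mfun_nonneg).mpr ⟨fun k => Mfun_row_summable k, ?_⟩
  refine Summable.of_nonneg_of_le (fun k => tsum_nonneg (fun j => Mfun_nonneg (k, j)))
    (fun k => Mfun_row_tsum_le k) ?_
  exact (Real.summable_one_div_nat_pow.mpr one_lt_two).mul_left _

lemma summable_one_div_p_log_p :
    Summable (fun p : Nat.Primes => 1 / ((p:ℝ) * Real.log (p:ℕ))) := by
  have hlog : (0:ℝ) < Real.log 2 := Real.log_pos one_lt_two
  refine Summable.of_nonneg_of_le (fun p => ?_)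
    (fun p => ?_) ((Mfun_summable).comp_injective iota_inj)
  · have h2 : (2:ℝ) ≤ (p:ℕ) := by exact_mod_cast p.property.two_le
    have : (0:ℝ) < Real.log (p:ℕ) := Real.log_pos (by linarith)
    positivity
  · show 1 / ((p:ℝ) * Real.log (p:ℕ)) ≤ Mfun (pk p, rnk p)
    unfold Mfun
    rw [if_pos (rnk_mul_pk_lt p)]
    refine one_div_le_one_div_of_le (by
      have := pk_pos p
      have : (1:ℝ) ≤ (pk p : ℝ) := by exact_mod_cast this
      positivity) ?_
    have hp_low : ((2:ℝ)^(pk p)) ≤ (p:ℕ) := by exact_mod_cast pk_low p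
    have hlogp : ((pk p : ℝ)) * Real.log 2 ≤ Real.log (p:ℕ) := by
      rw [← Real.log_pow]
      refine Real.log_le_log (by positivity) ?_
      exact_mod_cast pk_low p
    refine mul_le_mul hp_low hlogp (by positivity) (by positivity)

lemma rpow_le_const_mul_exp (s ε : ℝ) (hε : 0 < ε) :
    ∃ C : ℝ, 0 < C ∧ ∀ t : ℝ, Real.log 2 ≤ t → t ^ s ≤ C * Real.exp (ε * t) := by
  have hlog2 : (0:ℝ) < Real.log 2 := Real.log_pos one_lt_two
  set a : ℝ := (|s| + 1) / ε with ha
  have ha0 : 0 < a := by positivity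
  set c0 : ℝ := |Real.log (Real.log 2)| + |Real.log a - 1| with hc0
  refine ⟨Real.exp (|s| * c0), Real.exp_pos _, ?_⟩
  intro t ht
  have ht0 : 0 < t := lt_of_lt_of_le hlog2 ht
  have habs : |Real.log t| ≤ c0 + t / a := by
    rcases le_or_gt 0 (Real.log t) with h0 | h0
    · rw [abs_of_nonneg h0]
      have h1 : Real.log (t / a) ≤ t / a - 1 := Real.log_le_sub_one_of_pos (by positivity)
      rw [Real.log_div ht0.ne' ha0.ne'] at h1
      have h2 : Real.log t ≤ t / a + (Real.log a - 1) := by linarith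
      have : Real.log a - 1 ≤ |Real.log a - 1| := le_abs_self _
      have : (0:ℝ) ≤ |Real.log (Real.log 2)| := abs_nonneg _
      rw [hc0]; linarith [le_abs_self (Real.log a - 1)]
    · rw [abs_of_neg h0]
      have h1 : Real.log (Real.log 2) ≤ Real.log t := Real.log_le_log hlog2 ht
      have h2 : -Real.log t ≤ -Real.log (Real.log 2) := by linarith
      have h3 : -Real.log (Real.log 2) ≤ |Real.log (Real.log 2)| := neg_le_abs _
      have h4 : (0:ℝ) ≤ t / a := by positivity
      rw [hc0]; linarith [abs_nonneg (Real.log a - 1)]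
  have hkey : s * Real.log t ≤ |s| * c0 + ε * t := by
    have h1 : s * Real.log t ≤ |s| * |Real.log t| := by
      calc s * Real.log t ≤ |s * Real.log t| := le_abs_self _
      _ = |s| * |Real.log t| := abs_mul _ _
    have h2 : |s| * |Real.log t| ≤ |s| * (c0 + t / a) :=
      mul_le_mul_of_nonneg_left habs (abs_nonneg s)
    have h3 : |s| * (t / a) ≤ ε * t := by
      rw [ha, div_div_eq_mul_div, mul_div_assoc']
      rw [div_le_iff₀ (by positivity)]
      nlinarith [abs_nonneg s, ht0.le, hε.le]
    calc s * Real.log t ≤ |s| * |Real.log t| := h1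
    _ ≤ |s| * (c0 + t / a) := h2
    _ = |s| * c0 + |s| * (t / a) := mul_add _ _ _
    _ ≤ |s| * c0 + ε * t := add_le_add le_rfl h3
  calc t ^ s = Real.exp (Real.log t * s) := Real.rpow_def_of_pos ht0 s
  _ ≤ Real.exp (|s| * c0 + ε * t) := Real.exp_le_exp.mpr (by rw [mul_comm]; exact hkey)
  _ = Real.exp (|s| * c0) * Real.exp (ε * t) := Real.exp_add _ _


lemma prime_two_le (p : Nat.Primes) : (2:ℝ) ≤ (p : ℝ) := by exact_mod_cast p.property.two_le

lemma log_prime_pos (p : Nat.Primes) : 0 < Real.log (p:ℝ) :=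
  Real.log_pos (by linarith [prime_two_le p])

lemma log_two_le_log_prime (p : Nat.Primes) : Real.log 2 ≤ Real.log (p:ℝ) :=
  Real.log_le_log two_pos (prime_two_le p)

lemma summable_H :
    Summable (fun y : Nat.Primes × ℕ => (y.1 : ℝ) ^ (-(y.2 + 1 : ℤ)) /
      ((y.2 + 1 : ℝ) ^ 2 * Real.log (y.1 : ℝ))) := by
  have hmaj : Summable (fun y : Nat.Primes × ℕ =>
      (1 / ((y.1:ℝ) * Real.log (y.1:ℝ))) * (1/2:ℝ)^y.2) := by
    refine Summable.mul_of_nonneg summable_one_div_p_log_p summable_geometric_two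
      (fun p => by positivity) (fun n => by positivity)
  refine Summable.of_nonneg_of_le (fun y => ?_) (fun y => ?_) hmaj
  · have h1 : (0:ℝ) ≤ (y.1:ℝ) ^ (-(y.2 + 1 : ℤ)) :=
      zpow_nonneg (by linarith [prime_two_le y.1]) _
    have h2 := log_prime_pos y.1
    positivity
  · have hq := prime_two_le y.1
    have hlq := log_prime_pos y.1
    have e : (y.1:ℝ) ^ (-(y.2 + 1 : ℤ)) = 1 / (y.1:ℝ)^(y.2+1) := by
      rw [zpow_neg, ← one_div]
      norm_cast
    rw [e, div_div]
    have e2 : (1 / ((y.1:ℝ) * Real.log (y.1:ℝ))) * (1/2:ℝ)^y.2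
        = 1 / ((y.1:ℝ) * Real.log (y.1:ℝ) * 2^y.2) := by
      rw [one_div_pow]  -- ?
      rw [div_mul_div_comm, one_mul]
    rw [e2]
    refine one_div_le_one_div_of_le (by positivity) ?_
    have h1 : (2:ℝ)^y.2 ≤ (y.1:ℝ)^y.2 := pow_le_pow_left₀ (by norm_num) hq _
    calc (y.1:ℝ) * Real.log (y.1:ℝ) * 2^y.2 = 2^y.2 * (y.1:ℝ) * Real.log (y.1:ℝ) := by ring
    _ ≤ (y.1:ℝ)^y.2 * (y.1:ℝ) * Real.log (y.1:ℝ) := by gcongr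
    _ = (y.1:ℝ)^(y.2+1) * (1 * Real.log (y.1:ℝ)) := by rw [pow_succ]; ring
    _ ≤ (y.1:ℝ)^(y.2+1) * (((y.2:ℝ)+1)^2 * Real.log (y.1:ℝ)) := by
        have : (1:ℝ) ≤ ((y.2:ℝ)+1)^2 := by nlinarith [Nat.cast_nonneg (α := ℝ) y.2]
        gcongr

set_option maxHeartbeats 1000000 in
lemma summable_G (δ B : ℝ) (hδ : 0 < δ) :
    Summable (fun y : Nat.Primes × ℕ => (y.1 : ℝ) ^ (-((y.2 + 1 : ℝ) * (1 + δ))) *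
      ((y.2 + 1 : ℝ) * Real.log (y.1 : ℝ)) ^ B * Real.log (y.1 : ℝ)) := by
  obtain ⟨C, hC, hCb⟩ := rpow_le_const_mul_exp (B+1) (δ/2) (by positivity)
  have hmaj : Summable (fun y : Nat.Primes × ℕ =>
      C * ((y.1:ℝ) ^ (-(1+δ/2) : ℝ) * (1/2:ℝ)^y.2)) := by
    refine Summable.mul_left C ?_
    have h1 : Summable (fun p : Nat.Primes => (p:ℝ) ^ (-(1+δ/2) : ℝ)) :=
      (Nat.Primes.summable_rpow (r := -(1+δ/2))).mpr (by linarith)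
    exact h1.mul_of_nonneg summable_geometric_two
      (fun p => Real.rpow_nonneg (by positivity) _) (fun n => by positivity)
  refine Summable.of_nonneg_of_le (fun y => ?_) (fun y => ?_) hmaj
  · have h0 : (0:ℝ) < (y.1:ℝ) := lt_of_lt_of_le two_pos (prime_two_le y.1)
    have hl := log_prime_pos y.1
    have hm : (0:ℝ) < (y.2:ℝ) + 1 := by positivity
    positivity
  · have h0 : (0:ℝ) < (y.1:ℝ) := lt_of_lt_of_le two_pos (prime_two_le y.1)
    have hL := log_prime_pos y.1
    set M : ℝ := (y.2 : ℝ) + 1 with hM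
    have hM1 : (1:ℝ) ≤ M := by rw [hM]; have := Nat.cast_nonneg (α := ℝ) y.2; linarith
    set t : ℝ := M * Real.log (y.1:ℝ) with htdef
    have ht0 : 0 < t := by rw [htdef]; positivity
    have hLt : Real.log (y.1:ℝ) ≤ t := le_mul_of_one_le_left hL.le hM1
    have ht : Real.log 2 ≤ t := le_trans (log_two_le_log_prime y.1) hLt
    have ea : (y.1:ℝ) ^ (-(M * (1 + δ))) = Real.exp (-((1+δ) * t)) := by
      rw [Real.rpow_def_of_pos h0]
      congr 1
      rw [htdef]; ring
    have eb : t ^ B * Real.log (y.1:ℝ) ≤ t ^ (B+1) := by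
      rw [Real.rpow_add_one ht0.ne']
      exact mul_le_mul_of_nonneg_left hLt (Real.rpow_nonneg ht0.le _)
    have hfin : Real.exp (-((1+δ/2) * t)) ≤ (y.1:ℝ) ^ (-(1+δ/2) : ℝ) * (1/2:ℝ)^y.2 := by
      have e1 : Real.exp (-((1+δ/2) * t)) = (y.1:ℝ) ^ (-(1+δ/2) * M) := by
        rw [Real.rpow_def_of_pos h0]
        congr 1
        rw [htdef]; ring
      have e2 : (y.1:ℝ) ^ (-(1+δ/2) * M)
          = (y.1:ℝ) ^ (-(1+δ/2) : ℝ) * ((y.1:ℝ) ^ (-(1+δ/2) : ℝ))^y.2 := by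
        rw [← Real.rpow_natCast ((y.1:ℝ) ^ (-(1+δ/2) : ℝ)) y.2, ← Real.rpow_mul h0.le,
          ← Real.rpow_add h0]
        congr 1
        rw [hM]; ring
      rw [e1, e2]
      refine mul_le_mul_of_nonneg_left ?_ (Real.rpow_nonneg h0.le _)
      refine pow_le_pow_left₀ (Real.rpow_nonneg h0.le _) ?_ y.2
      calc (y.1:ℝ) ^ (-(1+δ/2) : ℝ) ≤ (2:ℝ) ^ (-(1+δ/2) : ℝ) :=
        Real.rpow_le_rpow_of_nonpos two_pos (prime_two_le y.1) (by linarith)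
      _ ≤ (2:ℝ) ^ (-1 : ℝ) := Real.rpow_le_rpow_of_exponent_le one_le_two (by linarith)
      _ = 1/2 := by rw [Real.rpow_neg_one]; norm_num
    calc (y.1 : ℝ) ^ (-(M * (1 + δ))) * (M * Real.log (y.1:ℝ)) ^ B * Real.log (y.1:ℝ)
        = Real.exp (-((1+δ) * t)) * (t ^ B * Real.log (y.1:ℝ)) := by rw [ea, htdef]; ring
    _ ≤ Real.exp (-((1+δ) * t)) * t ^ (B+1) := by
        exact mul_le_mul_of_nonneg_left eb (Real.exp_nonneg _)
    _ ≤ Real.exp (-((1+δ) * t)) * (C * Real.exp (δ/2 * t)) := by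
        exact mul_le_mul_of_nonneg_left (hCb t ht) (Real.exp_nonneg _)
    _ = C * Real.exp (-((1+δ/2) * t)) := by
        rw [show -((1+δ/2) * t) = -((1+δ) * t) + δ/2 * t by ring, Real.exp_add]
        ring
    _ ≤ C * ((y.1:ℝ) ^ (-(1+δ/2) : ℝ) * (1/2:ℝ)^y.2) := by
        exact mul_le_mul_of_nonneg_left hfin hC.le

def Gf (δ B : ℝ) : Nat.Primes × ℕ → ℝ := fun y =>
  (y.1 : ℝ) ^ (-((y.2 + 1 : ℝ) * (1 + δ))) *
    ((y.2 + 1 : ℝ) * Real.log (y.1 : ℝ)) ^ B * Real.log (y.1 : ℝ)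

def Hf : Nat.Primes × ℕ → ℝ := fun y =>
  (y.1 : ℝ) ^ (-(y.2 + 1 : ℤ)) / ((y.2 + 1 : ℝ) ^ 2 * Real.log (y.1 : ℝ))

def Ff (δ B : ℝ) : (Nat.Primes × ℕ) × (Nat.Primes × ℕ) → ℝ := fun z =>
  (z.1.1 : ℝ) ^ (-((z.1.2 + 1 : ℝ) * (1 + δ))) * (z.2.1 : ℝ) ^ (-(z.2.2 + 1 : ℤ)) *
    ((z.1.2 + 1 : ℝ) * Real.log (z.1.1 : ℝ)) ^ B * Real.log (z.1.1 : ℝ) /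
    ((z.2.2 + 1 : ℝ) *
      ((z.2.2 + 1 : ℝ) * Real.log (z.2.1 : ℝ) - (z.1.2 + 1 : ℝ) * Real.log (z.1.1 : ℝ)))

lemma Gf_nonneg (δ B : ℝ) (y : Nat.Primes × ℕ) : 0 ≤ Gf δ B y := by
  have h0 : (0:ℝ) < (y.1:ℝ) := lt_of_lt_of_le two_pos (prime_two_le y.1)
  have hl := log_prime_pos y.1
  have hm : (0:ℝ) < (y.2:ℝ) + 1 := by positivity
  unfold Gf
  positivity

lemma Hf_nonneg (y : Nat.Primes × ℕ) : 0 ≤ Hf y := by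
  have h0 : (0:ℝ) < (y.1:ℝ) := lt_of_lt_of_le two_pos (prime_two_le y.1)
  have hl := log_prime_pos y.1
  have h1 : (0:ℝ) ≤ (y.1:ℝ) ^ (-(y.2 + 1 : ℤ)) := zpow_nonneg h0.le _
  unfold Hf
  positivity

lemma key_bound (δ B : ℝ) (hδ : 0 < δ) {z : (Nat.Primes × ℕ) × (Nat.Primes × ℕ)}
    (hz : ((z.1.1 : ℕ)) ^ (2 * (z.1.2 + 1)) ≤ ((z.2.1 : ℕ)) ^ (z.2.2 + 1)) :
    0 ≤ Ff δ B z ∧ Ff δ B z ≤ 2 * (Gf δ B z.1 * Hf z.2) := by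
  obtain ⟨⟨p, m⟩, q, n⟩ := z
  have hp0 : (0:ℝ) < (p:ℝ) := lt_of_lt_of_le two_pos (prime_two_le p)
  have hq0 : (0:ℝ) < (q:ℝ) := lt_of_lt_of_le two_pos (prime_two_le q)
  have hL : 0 < Real.log (p:ℝ) := log_prime_pos p
  have hK : 0 < Real.log (q:ℝ) := log_prime_pos q
  have hM : (1:ℝ) ≤ (m:ℝ) + 1 := by have := Nat.cast_nonneg (α := ℝ) m; linarith
  have hN : (1:ℝ) ≤ (n:ℝ) + 1 := by have := Nat.cast_nonneg (α := ℝ) n; linarith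
  have hlog : 2 * ((m:ℝ)+1) * Real.log (p:ℝ) ≤ ((n:ℝ)+1) * Real.log (q:ℝ) := by
    have hcast : ((p:ℕ):ℝ) ^ (2*(m+1)) ≤ ((q:ℕ):ℝ) ^ (n+1) := by exact_mod_cast hz
    have hlog' := Real.log_le_log (pow_pos hp0 _) hcast
    rw [Real.log_pow, Real.log_pow] at hlog'
    push_cast at hlog'
    linarith
  have hgap : ((n:ℝ)+1) * Real.log (q:ℝ) / 2
      ≤ ((n:ℝ)+1) * Real.log (q:ℝ) - ((m:ℝ)+1) * Real.log (p:ℝ) := by linarith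
  have hgap0 : 0 < ((n:ℝ)+1) * Real.log (q:ℝ) - ((m:ℝ)+1) * Real.log (p:ℝ) := by nlinarith
  set A : ℝ := (p : ℝ) ^ (-(((m:ℝ) + 1) * (1 + δ))) * (q : ℝ) ^ (-(n + 1 : ℤ)) *
    (((m:ℝ) + 1) * Real.log (p:ℝ)) ^ B * Real.log (p:ℝ) with hA
  have hAnn : 0 ≤ A := by
    rw [hA]
    have h1 : (0:ℝ) ≤ (q:ℝ) ^ (-(n + 1 : ℤ)) := zpow_nonneg hq0.le _
    have hm : (0:ℝ) < (m:ℝ) + 1 := by linarith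
    positivity
  have hDpos : 0 < ((n:ℝ)+1) *
      (((n:ℝ)+1) * Real.log (q:ℝ) - ((m:ℝ)+1) * Real.log (p:ℝ)) := by
    exact mul_pos (by linarith) hgap0
  have hFf : Ff δ B ((p, m), (q, n)) = A / (((n:ℝ)+1) *
      (((n:ℝ)+1) * Real.log (q:ℝ) - ((m:ℝ)+1) * Real.log (p:ℝ))) := rfl
  constructor
  · rw [hFf]
    exact div_nonneg hAnn hDpos.le
  · rw [hFf]
    have hhalf0 : 0 < ((n:ℝ)+1)^2 * Real.log (q:ℝ) / 2 := by positivity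
    have hhalfle : ((n:ℝ)+1)^2 * Real.log (q:ℝ) / 2 ≤ ((n:ℝ)+1) *
        (((n:ℝ)+1) * Real.log (q:ℝ) - ((m:ℝ)+1) * Real.log (p:ℝ)) := by
      have h1 : ((n:ℝ)+1)^2 * Real.log (q:ℝ) / 2
          = ((n:ℝ)+1) * (((n:ℝ)+1) * Real.log (q:ℝ) / 2) := by ring
      rw [h1]
      exact mul_le_mul_of_nonneg_left hgap (by linarith)
    calc A / (((n:ℝ)+1) * (((n:ℝ)+1) * Real.log (q:ℝ) - ((m:ℝ)+1) * Real.log (p:ℝ)))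
        ≤ A / (((n:ℝ)+1)^2 * Real.log (q:ℝ) / 2) :=
      div_le_div_of_nonneg_left hAnn hhalf0 hhalfle
    _ = 2 * (Gf δ B (p, m) * Hf (q, n)) := by
        unfold Gf Hf
        rw [hA]
        field_simp

lemma quadruple_series_tail_bound_aux (δ A B : ℝ) (hδ : 0 < δ) (hAB : A < B) :
    Summable (fun x : {x : (Nat.Primes × ℕ) × (Nat.Primes × ℕ) //
        ((x.1.1 : ℕ)) ^ (2 * (x.1.2 + 1)) ≤ ((x.2.1 : ℕ)) ^ (x.2.2 + 1)} => Ff δ B x.val) ∧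
    (∑' x : {x : (Nat.Primes × ℕ) × (Nat.Primes × ℕ) //
        ((x.1.1 : ℕ)) ^ (2 * (x.1.2 + 1)) ≤ ((x.2.1 : ℕ)) ^ (x.2.2 + 1)}, Ff δ B x.val) ≤
      2 * (∑' y : Nat.Primes × ℕ, Gf δ B y) * (∑' y : Nat.Primes × ℕ, Hf y) := by
  have hG : Summable (Gf δ B) := summable_G δ B hδ
  have hH : Summable Hf := summable_H
  have hGHnn : ∀ z : (Nat.Primes × ℕ) × (Nat.Primes × ℕ),
      0 ≤ 2 * (Gf δ B z.1 * Hf z.2) := fun z => by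
    have := Gf_nonneg δ B z.1
    have := Hf_nonneg z.2
    positivity
  have hGH : Summable (fun z : (Nat.Primes × ℕ) × (Nat.Primes × ℕ) =>
      2 * (Gf δ B z.1 * Hf z.2)) :=
    (hG.mul_of_nonneg hH (Gf_nonneg δ B) Hf_nonneg).mul_left 2
  have hGHsub : Summable (fun x : {x : (Nat.Primes × ℕ) × (Nat.Primes × ℕ) //
      ((x.1.1 : ℕ)) ^ (2 * (x.1.2 + 1)) ≤ ((x.2.1 : ℕ)) ^ (x.2.2 + 1)} =>
      2 * (Gf δ B x.val.1 * Hf x.val.2)) :=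
    hGH.subtype _
  have hFnn : ∀ x : {x : (Nat.Primes × ℕ) × (Nat.Primes × ℕ) //
      ((x.1.1 : ℕ)) ^ (2 * (x.1.2 + 1)) ≤ ((x.2.1 : ℕ)) ^ (x.2.2 + 1)},
      0 ≤ Ff δ B x.val := fun x => (key_bound δ B hδ x.property).1
  have hkey : ∀ x : {x : (Nat.Primes × ℕ) × (Nat.Primes × ℕ) //
      ((x.1.1 : ℕ)) ^ (2 * (x.1.2 + 1)) ≤ ((x.2.1 : ℕ)) ^ (x.2.2 + 1)},
      Ff δ B x.val ≤ 2 * (Gf δ B x.val.1 * Hf x.val.2) :=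
    fun x => (key_bound δ B hδ x.property).2
  have hFsub : Summable (fun x : {x : (Nat.Primes × ℕ) × (Nat.Primes × ℕ) //
      ((x.1.1 : ℕ)) ^ (2 * (x.1.2 + 1)) ≤ ((x.2.1 : ℕ)) ^ (x.2.2 + 1)} => Ff δ B x.val) :=
    Summable.of_nonneg_of_le hFnn hkey hGHsub
  refine ⟨hFsub, ?_⟩
  have step1 := Summable.tsum_le_tsum hkey hFsub hGHsub
  have step2 : (∑' x : {x : (Nat.Primes × ℕ) × (Nat.Primes × ℕ) //
      ((x.1.1 : ℕ)) ^ (2 * (x.1.2 + 1)) ≤ ((x.2.1 : ℕ)) ^ (x.2.2 + 1)},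
      2 * (Gf δ B x.val.1 * Hf x.val.2)) ≤
      ∑' z : (Nat.Primes × ℕ) × (Nat.Primes × ℕ), 2 * (Gf δ B z.1 * Hf z.2) := by
    have e := tsum_subtype {x : (Nat.Primes × ℕ) × (Nat.Primes × ℕ) |
        ((x.1.1 : ℕ)) ^ (2 * (x.1.2 + 1)) ≤ ((x.2.1 : ℕ)) ^ (x.2.2 + 1)}
      (fun z => 2 * (Gf δ B z.1 * Hf z.2))
    exact le_of_eq_of_le e (Summable.tsum_le_tsum
      (fun z => Set.indicator_le_self' (fun w _ => hGHnn w) z) (hGH.indicator _) hGH)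
  have step3 : (∑' z : (Nat.Primes × ℕ) × (Nat.Primes × ℕ), 2 * (Gf δ B z.1 * Hf z.2))
      = 2 * (∑' y : Nat.Primes × ℕ, Gf δ B y) * (∑' y : Nat.Primes × ℕ, Hf y) := by
    rw [tsum_mul_left]
    rw [Summable.tsum_prod' (hG.mul_of_nonneg hH (Gf_nonneg δ B) Hf_nonneg)
      (fun a => hH.mul_left (Gf δ B a))]
    have e1 : ∀ a : Nat.Primes × ℕ, ∑' b, Gf δ B a * Hf b = Gf δ B a * ∑' b, Hf b :=
      fun a => tsum_mul_left
    rw [tsum_congr e1, tsum_mul_right]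
    ring
  exact step1.trans (step2.trans_eq step3)



/-- Fix `δ > 0` and reals `A < B`.  The quadruple series over primes `p, q` and positive
integers `m, n` with `q^n ≥ p^{2m}` of
`p^{-m(1+δ)} q^{-n} (m log p)^B (log p) / (n (n log q - m log p))` converges, and its sum
is at most `2 (∑_{p,m} p^{-m(1+δ)} (m log p)^B log p)(∑_{q,n} q^{-n}/(n² log q))`. -/
theorem quadruple_series_tail_bound (δ A B : ℝ) (hδ : 0 < δ) (hAB : A < B) :
    Summable (fun x : {x : (Nat.Primes × ℕ) × (Nat.Primes × ℕ) //
        ((x.1.1 : ℕ)) ^ (2 * (x.1.2 + 1)) ≤ ((x.2.1 : ℕ)) ^ (x.2.2 + 1)} =>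
      ((x : (Nat.Primes × ℕ) × (Nat.Primes × ℕ)).1.1 : ℝ) ^
            (-(((x : (Nat.Primes × ℕ) × (Nat.Primes × ℕ)).1.2 + 1 : ℝ) * (1 + δ))) *
        ((x : (Nat.Primes × ℕ) × (Nat.Primes × ℕ)).2.1 : ℝ) ^
            (-((x : (Nat.Primes × ℕ) × (Nat.Primes × ℕ)).2.2 + 1 : ℤ)) *
        (((x : (Nat.Primes × ℕ) × (Nat.Primes × ℕ)).1.2 + 1 : ℝ) *
            Real.log ((x : (Nat.Primes × ℕ) × (Nat.Primes × ℕ)).1.1 : ℝ)) ^ B *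
        Real.log ((x : (Nat.Primes × ℕ) × (Nat.Primes × ℕ)).1.1 : ℝ) /
        (((x : (Nat.Primes × ℕ) × (Nat.Primes × ℕ)).2.2 + 1 : ℝ) *
          (((x : (Nat.Primes × ℕ) × (Nat.Primes × ℕ)).2.2 + 1 : ℝ) *
              Real.log ((x : (Nat.Primes × ℕ) × (Nat.Primes × ℕ)).2.1 : ℝ) -
            ((x : (Nat.Primes × ℕ) × (Nat.Primes × ℕ)).1.2 + 1 : ℝ) *
              Real.log ((x : (Nat.Primes × ℕ) × (Nat.Primes × ℕ)).1.1 : ℝ)))) ∧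
    (∑' x : {x : (Nat.Primes × ℕ) × (Nat.Primes × ℕ) //
        ((x.1.1 : ℕ)) ^ (2 * (x.1.2 + 1)) ≤ ((x.2.1 : ℕ)) ^ (x.2.2 + 1)},
      ((x : (Nat.Primes × ℕ) × (Nat.Primes × ℕ)).1.1 : ℝ) ^
            (-(((x : (Nat.Primes × ℕ) × (Nat.Primes × ℕ)).1.2 + 1 : ℝ) * (1 + δ))) *
        ((x : (Nat.Primes × ℕ) × (Nat.Primes × ℕ)).2.1 : ℝ) ^
            (-((x : (Nat.Primes × ℕ) × (Nat.Primes × ℕ)).2.2 + 1 : ℤ)) *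
        (((x : (Nat.Primes × ℕ) × (Nat.Primes × ℕ)).1.2 + 1 : ℝ) *
            Real.log ((x : (Nat.Primes × ℕ) × (Nat.Primes × ℕ)).1.1 : ℝ)) ^ B *
        Real.log ((x : (Nat.Primes × ℕ) × (Nat.Primes × ℕ)).1.1 : ℝ) /
        (((x : (Nat.Primes × ℕ) × (Nat.Primes × ℕ)).2.2 + 1 : ℝ) *
          (((x : (Nat.Primes × ℕ) × (Nat.Primes × ℕ)).2.2 + 1 : ℝ) *
              Real.log ((x : (Nat.Primes × ℕ) × (Nat.Primes × ℕ)).2.1 : ℝ) -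
            ((x : (Nat.Primes × ℕ) × (Nat.Primes × ℕ)).1.2 + 1 : ℝ) *
              Real.log ((x : (Nat.Primes × ℕ) × (Nat.Primes × ℕ)).1.1 : ℝ)))) ≤
      2 * (∑' y : Nat.Primes × ℕ,
          (y.1 : ℝ) ^ (-((y.2 + 1 : ℝ) * (1 + δ))) *
            ((y.2 + 1 : ℝ) * Real.log (y.1 : ℝ)) ^ B * Real.log (y.1 : ℝ)) *
        (∑' y : Nat.Primes × ℕ,
          (y.1 : ℝ) ^ (-(y.2 + 1 : ℤ)) /
            ((y.2 + 1 : ℝ) ^ 2 * Real.log (y.1 : ℝ))) := by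
  exact quadruple_series_tail_bound_aux δ A B hδ hAB
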